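/- Let A = [A_{ij}] and B = [B_{ij}] be positive definite complex matrices of size nk × nk, each regarded as an n × n block matrix with k × k blocks, and let 2 ≤ μ ≤ n. Then det( (A_μ ∘ B_μ)/(A_{μ−1} ∘ B_{μ−1}) ) + det( (A_μ/A_{μ−1}) ∘ (B_μ/B_{μ−1}) ) ≥ det( A_{μμ} ∘ (B_μ/B_{μ−1}) ) + det( B_{μμ} ∘ (A_μ/A_{μ−1}) ), where all four determinants are of positive semidefinite k × k matrices (hence nonnegative reals) and the inequality is of real numbers. -/

import Mathlib

open Matrix ComplexOrder

/-- The `μk × μk` leading principal block submatrix `A_μ` (for `μ ≤ n`) of an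
`n × n` block matrix with `k × k` blocks. -/
def leadBlock {n k : ℕ} (A : Matrix (Fin n × Fin k) (Fin n × Fin k) ℂ)
    (μ : ℕ) (h : μ ≤ n) : Matrix (Fin μ × Fin k) (Fin μ × Fin k) ℂ :=
  A.submatrix (fun p => (Fin.castLE h p.1, p.2)) (fun p => (Fin.castLE h p.1, p.2))

/-- The `μ`-th (1-based) diagonal `k × k` block `A_{μμ}` of an
`n × n` block matrix with `k × k` blocks. -/
def diagBlock {n k : ℕ} (A : Matrix (Fin n × Fin k) (Fin n × Fin k) ℂ)
    (μ : ℕ) (h : μ - 1 < n) : Matrix (Fin k) (Fin k) ℂ :=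
  Matrix.of fun a b => A (⟨μ - 1, h⟩, a) (⟨μ - 1, h⟩, b)

/-- The `k × k` Schur complement `A_μ / A_{μ-1}` of the leading principal block
submatrix `A_{μ-1}` in the leading principal block submatrix `A_μ`, i.e.
`A_{μμ} − M₂₁ A_{μ-1}⁻¹ M₁₂` where `M₂₁` (resp. `M₁₂`) is the `μ`-th block row
(resp. column) of `A_μ` with its last block removed. -/
noncomputable def schurLead {n k : ℕ} (A : Matrix (Fin n × Fin k) (Fin n × Fin k) ℂ)
    (μ : ℕ) (h : μ - 1 < n) : Matrix (Fin k) (Fin k) ℂ :=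
  diagBlock A μ h -
    (Matrix.of fun a (p : Fin (μ - 1) × Fin k) =>
        A (⟨μ - 1, h⟩, a) (Fin.castLE h.le p.1, p.2)) *
      (leadBlock A (μ - 1) h.le)⁻¹ *
      (Matrix.of fun (p : Fin (μ - 1) × Fin k) b =>
        A (Fin.castLE h.le p.1, p.2) (⟨μ - 1, h⟩, b))


set_option linter.unusedSectionVars false

variable {m l : Type*} [Fintype m] [DecidableEq m] [Fintype l] [DecidableEq l]

open scoped MatrixOrder in
theorem my_psd_eq {A : Matrix m m ℂ} (hA : A.PosSemidef) : ∃ C : Matrix m m ℂ, A = Cᴴ * C := by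
  obtain ⟨C, hC⟩ := CStarAlgebra.nonneg_iff_eq_star_mul_self.mp hA.nonneg
  exact ⟨C, hC⟩

theorem my_had_qf {A : Matrix m m ℂ} (B C : Matrix m m ℂ) (hC : A = Cᴴ * C) (x : m → ℂ) :
    star x ⬝ᵥ (Matrix.hadamard A B) *ᵥ x
      = ∑ t, star (fun i => C t i * x i) ⬝ᵥ B *ᵥ (fun i => C t i * x i) := by
  have expand : ∀ i j, star (x i) * (A i j * B i j * x j)
      = ∑ t, star (C t i * x i) * (B i j * (C t j * x j)) := by
    intro i j
    rw [hC]
    simp only [Matrix.mul_apply, Matrix.conjTranspose_apply, Finset.sum_mul, Finset.mul_sum]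
    refine Finset.sum_congr rfl fun t _ => ?_
    simp only [star_mul']
    ring
  calc star x ⬝ᵥ (Matrix.hadamard A B) *ᵥ x
      = ∑ i, ∑ j, star (x i) * (A i j * B i j * x j) := by
        simp [dotProduct, mulVec, Matrix.hadamard_apply, Finset.mul_sum, mul_assoc]
    _ = ∑ i, ∑ j, ∑ t, star (C t i * x i) * (B i j * (C t j * x j)) := by
        simp_rw [expand]
    _ = ∑ i, ∑ t, ∑ j, star (C t i * x i) * (B i j * (C t j * x j)) :=
        Finset.sum_congr rfl fun i _ => Finset.sum_comm
    _ = ∑ t, ∑ i, ∑ j, star (C t i * x i) * (B i j * (C t j * x j)) := Finset.sum_comm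
    _ = ∑ t, star (fun i => C t i * x i) ⬝ᵥ B *ᵥ (fun i => C t i * x i) := by
        simp [dotProduct, mulVec, Finset.mul_sum]

theorem my_had_herm {A B : Matrix m m ℂ} (hA : A.IsHermitian) (hB : B.IsHermitian) :
    (Matrix.hadamard A B).IsHermitian := by
  ext i j
  simp only [Matrix.conjTranspose_apply, Matrix.hadamard_apply, star_mul']
  rw [hA.apply, hB.apply]

theorem my_hadamard_posSemidef {A B : Matrix m m ℂ} (hA : A.PosSemidef) (hB : B.PosSemidef) :
    (Matrix.hadamard A B).PosSemidef := by
  obtain ⟨C, hC⟩ := my_psd_eq hA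
  refine .of_dotProduct_mulVec_nonneg (my_had_herm hA.1 hB.1) fun x => ?_
  rw [my_had_qf B C hC x]
  exact Finset.sum_nonneg fun t _ => hB.dotProduct_mulVec_nonneg _

theorem my_posDef_of_det {A : Matrix m m ℂ} (hA : A.PosSemidef) (h : IsUnit A.det) :
    A.PosDef := by
  refine .of_dotProduct_mulVec_pos hA.1 fun x hx => (hA.dotProduct_mulVec_nonneg x).lt_of_ne fun h0 => hx ?_
  have hz := (hA.dotProduct_mulVec_zero_iff x).mp h0.symm
  have hinj := Matrix.mulVec_injective_iff_isUnit.mpr ((Matrix.isUnit_iff_isUnit_det A).mpr h)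
  exact hinj (by simpa [Matrix.mulVec_zero] using hz)

theorem my_hadamard_posDef {A B : Matrix m m ℂ} (hA : A.PosDef) (hB : B.PosDef) :
    (Matrix.hadamard A B).PosDef := by
  have hP := hA.posSemidef
  obtain ⟨S, hSA⟩ := my_psd_eq hP
  have hSdet : IsUnit S.det := by
    have hAdet : A.det ≠ 0 := hA.det_pos.ne'
    exact isUnit_iff_ne_zero.mpr fun hz => hAdet (by rw [hSA, Matrix.det_mul, hz, mul_zero])
  refine .of_dotProduct_mulVec_pos (my_had_herm hA.1 hB.1) fun x hx => ?_
  refine ((my_hadamard_posSemidef hA.posSemidef hB.posSemidef).dotProduct_mulVec_nonneg x).lt_of_ne fun h0 => ?_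
  rw [my_had_qf B S hSA x] at h0
  have hterm : ∀ t ∈ Finset.univ, (0:ℂ) ≤ star (fun i => S t i * x i) ⬝ᵥ B *ᵥ (fun i => S t i * x i) :=
    fun t _ => hB.posSemidef.dotProduct_mulVec_nonneg _
  have hzero := (Finset.sum_eq_zero_iff_of_nonneg hterm).mp h0.symm
  have hy : ∀ t, (fun i => S t i * x i) = 0 := by
    intro t
    by_contra hne
    exact (hB.dotProduct_mulVec_pos hne).ne' (hzero t (Finset.mem_univ t))
  obtain ⟨i, hxi⟩ := Function.ne_iff.mp hx
  have hcol : ∀ t, S t i = 0 := by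
    intro t
    have := congrFun (hy t) i
    simpa [hxi] using mul_eq_zero.mp this |>.resolve_right hxi
  have hinj := Matrix.mulVec_injective_iff_isUnit.mpr ((Matrix.isUnit_iff_isUnit_det S).mpr hSdet)
  have : S *ᵥ Pi.single i 1 = S *ᵥ 0 := by
    simp [Matrix.mulVec_single, Matrix.mulVec_zero]
    ext t
    simp [hcol t]
  have := hinj this
  simpa using congrFun this i

theorem my_cs {M : Matrix m m ℂ} (hM : M.PosSemidef) (v w : m → ℂ) :
    (star v ⬝ᵥ M *ᵥ w) * (star w ⬝ᵥ M *ᵥ v) ≤ (star v ⬝ᵥ M *ᵥ v) * (star w ⬝ᵥ M *ᵥ w) := by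
  obtain ⟨B, rfl⟩ := my_psd_eq hM
  have key : ∀ a b : m → ℂ, star a ⬝ᵥ (Bᴴ * B) *ᵥ b = star (B *ᵥ a) ⬝ᵥ (B *ᵥ b) := by
    intro a b
    rw [← Matrix.mulVec_mulVec, Matrix.dotProduct_mulVec, Matrix.star_mulVec]
  simp only [key]
  set a := B *ᵥ v
  set b := B *ᵥ w
  set a' : EuclideanSpace ℂ m := (WithLp.equiv 2 _).symm a
  set b' : EuclideanSpace ℂ m := (WithLp.equiv 2 _).symm b
  have h1 : inner ℂ a' b' = star a ⬝ᵥ b :=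
    (EuclideanSpace.inner_toLp_toLp a b).trans (dotProduct_comm _ _)
  have h2 : inner ℂ b' a' = star b ⬝ᵥ a :=
    (EuclideanSpace.inner_toLp_toLp b a).trans (dotProduct_comm _ _)
  have h3 : inner ℂ a' a' = star a ⬝ᵥ a :=
    (EuclideanSpace.inner_toLp_toLp a a).trans (dotProduct_comm _ _)
  have h4 : inner ℂ b' b' = star b ⬝ᵥ b :=
    (EuclideanSpace.inner_toLp_toLp b b).trans (dotProduct_comm _ _)
  have h5 : star a ⬝ᵥ b = (starRingEnd ℂ) (inner ℂ b' a') := by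
    rw [← h1, inner_conj_symm]
  rw [h5, ← h2, ← h3, ← h4, mul_comm, Complex.mul_conj,
    inner_self_eq_norm_sq_to_K, inner_self_eq_norm_sq_to_K]
  have hcs : ‖(inner ℂ b' a' : ℂ)‖ ≤ ‖b'‖ * ‖a'‖ := norm_inner_le_norm b' a'
  have hsq : Complex.normSq (inner ℂ b' a' : ℂ) ≤ (‖b'‖ * ‖a'‖)^2 := by
    rw [← Complex.sq_norm]
    exact pow_le_pow_left₀ (norm_nonneg _) hcs 2
  calc (Complex.normSq (inner ℂ b' a' : ℂ) : ℂ) ≤ (((‖b'‖ * ‖a'‖)^2 : ℝ) : ℂ) := by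
        exact_mod_cast Complex.real_le_real.mpr hsq
    _ = (‖a'‖ : ℂ)^2 * (‖b'‖ : ℂ)^2 := by push_cast; ring

noncomputable section

/-- rank-one matrix `v v*` -/
def outerC (v : m → ℂ) : Matrix m m ℂ := Matrix.of fun i j => v i * star (v j)

theorem outerC_posSemidef (v : m → ℂ) : (outerC v).PosSemidef := by
  refine .of_dotProduct_mulVec_nonneg ?_ ?_
  · ext i j
    simp [outerC, Matrix.conjTranspose_apply, star_mul', mul_comm]
  · intro x
    have : star x ⬝ᵥ (outerC v) *ᵥ x
        = star (star v ⬝ᵥ x) * (star v ⬝ᵥ x) := by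
      simp only [dotProduct, mulVec, outerC, Matrix.of_apply, Finset.mul_sum, star_sum,
        Pi.star_apply, star_mul', Finset.sum_mul, star_star]
      rw [Finset.sum_comm]
      refine Finset.sum_congr rfl fun i _ => Finset.sum_congr rfl fun j _ => ?_
      ring
    rw [this]
    exact star_mul_self_nonneg _

private def colM (v : m → ℂ) : Matrix m (Fin 1) ℂ := Matrix.of fun i _ => v i

private def colM₂ (v w : m → ℂ) : Matrix m (Fin 2) ℂ :=
  Matrix.of fun i t => if t = 0 then v i else w i

theorem det_add_outer {R : Matrix m m ℂ} (hR : R.PosDef) (v : m → ℂ) :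
    (R + outerC v).det = R.det * (1 + star v ⬝ᵥ R⁻¹ *ᵥ v) := by
  have h1 : outerC v = colM v * (colM v)ᴴ := by
    ext i j
    simp [outerC, colM, Matrix.mul_apply]
  rw [h1, Matrix.det_add_mul (colM v) (colM v)ᴴ (isUnit_iff_ne_zero.mpr hR.det_pos.ne')]
  congr 1
  rw [Matrix.det_fin_one]
  simp only [Matrix.add_apply, Matrix.one_apply_eq, Matrix.mul_apply, Matrix.conjTranspose_apply,
    colM, Matrix.of_apply, dotProduct, mulVec, Finset.mul_sum]
  congr 1
  rw [Finset.sum_comm]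
  refine Finset.sum_congr rfl fun i _ => ?_
  rw [Finset.sum_mul]
  refine Finset.sum_congr rfl fun j _ => ?_
  simp only [Pi.star_apply]
  ring

theorem det_add_outer₂ {R : Matrix m m ℂ} (hR : R.PosDef) (v w : m → ℂ) :
    (R + outerC v + outerC w).det
      = R.det * ((1 + star v ⬝ᵥ R⁻¹ *ᵥ v) * (1 + star w ⬝ᵥ R⁻¹ *ᵥ w)
          - (star v ⬝ᵥ R⁻¹ *ᵥ w) * (star w ⬝ᵥ R⁻¹ *ᵥ v)) := by
  have h1 : R + outerC v + outerC w = R + colM₂ v w * (colM₂ v w)ᴴ := by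
    ext i j
    simp [outerC, colM₂, Matrix.mul_apply, Fin.sum_univ_two, Matrix.add_apply]
    ring
  rw [h1, Matrix.det_add_mul (colM₂ v w) (colM₂ v w)ᴴ (isUnit_iff_ne_zero.mpr hR.det_pos.ne')]
  congr 1
  rw [Matrix.det_fin_two]
  have entry : ∀ (a b : m → ℂ) (s t : Fin 2),
      ((colM₂ v w)ᴴ * R⁻¹ * colM₂ v w) s t
        = star ((colM₂ v w)ᵀ s) ⬝ᵥ R⁻¹ *ᵥ ((colM₂ v w)ᵀ t) := by
    intro a b s t
    simp only [Matrix.mul_apply, Matrix.conjTranspose_apply, Matrix.transpose_apply, dotProduct,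
      mulVec, Finset.mul_sum, Pi.star_apply]
    rw [Finset.sum_comm]
    refine Finset.sum_congr rfl fun i _ => ?_
    rw [Finset.sum_mul]
    refine Finset.sum_congr rfl fun j _ => ?_
    ring
  have hcol0 : ((colM₂ v w)ᵀ 0) = v := by ext i; simp [colM₂]
  have hcol1 : ((colM₂ v w)ᵀ 1) = w := by ext i; simp [colM₂]
  simp only [Matrix.add_apply, Matrix.one_apply, entry v w, hcol0, hcol1]
  norm_num

theorem det_supermod_base {R : Matrix m m ℂ} (hR : R.PosDef) (v w : m → ℂ) :
    (R + outerC v).det + (R + outerC w).det ≤ (R + outerC v + outerC w).det + R.det := by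
  have hinv : (R⁻¹).PosSemidef := hR.inv.posSemidef
  have hcs := my_cs hinv v w
  have key : (R + outerC v + outerC w).det + R.det - ((R + outerC v).det + (R + outerC w).det)
      = R.det * ((star v ⬝ᵥ R⁻¹ *ᵥ v) * (star w ⬝ᵥ R⁻¹ *ᵥ w)
          - (star v ⬝ᵥ R⁻¹ *ᵥ w) * (star w ⬝ᵥ R⁻¹ *ᵥ v)) := by
    rw [det_add_outer hR v, det_add_outer hR w, det_add_outer₂ hR v w]
    ring
  have h0 : (0:ℂ) ≤ R.det * ((star v ⬝ᵥ R⁻¹ *ᵥ v) * (star w ⬝ᵥ R⁻¹ *ᵥ w)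
      - (star v ⬝ᵥ R⁻¹ *ᵥ w) * (star w ⬝ᵥ R⁻¹ *ᵥ v)) :=
    mul_nonneg hR.det_pos.le (sub_nonneg.mpr hcs)
  exact sub_nonneg.mp (key ▸ h0)

theorem det_le_det_add_outer {R : Matrix m m ℂ} (hR : R.PosDef) (v : m → ℂ) :
    R.det ≤ (R + outerC v).det := by
  rw [det_add_outer hR v]
  calc R.det = R.det * 1 := (mul_one _).symm
    _ ≤ R.det * (1 + star v ⬝ᵥ R⁻¹ *ᵥ v) :=
      mul_le_mul_of_nonneg_left (le_add_of_nonneg_right (hR.inv.posSemidef.dotProduct_mulVec_nonneg v)) hR.det_pos.le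

theorem psd_decomp {P : Matrix m m ℂ} (hP : P.PosSemidef) :
    ∃ g : m → (m → ℂ), P = ∑ i, outerC (g i) := by
  obtain ⟨C, rfl⟩ := my_psd_eq hP
  refine ⟨fun i a => star (C i a), ?_⟩
  ext a b
  simp [Matrix.mul_apply, outerC, Matrix.sum_apply]

theorem sum_outer_posSemidef (g : m → (m → ℂ)) (s : Finset m) :
    (∑ i ∈ s, outerC (g i)).PosSemidef := by
  refine Finset.sum_induction _ _ (fun a b ha hb => ha.add hb) Matrix.PosSemidef.zero
    fun i _ => outerC_posSemidef (g i)

theorem det_mono_adds {P : Matrix m m ℂ} (hP : P.PosSemidef) :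
    ∀ {R : Matrix m m ℂ}, R.PosDef → R.det ≤ (R + P).det := by
  obtain ⟨g, rfl⟩ := psd_decomp hP
  have main : ∀ (s : Finset m) {R : Matrix m m ℂ}, R.PosDef →
      R.det ≤ (R + ∑ i ∈ s, outerC (g i)).det := by
    intro s
    induction s using Finset.induction_on with
    | empty => intro R hR; simp
    | @insert a s ha ih =>
      intro R hR
      have e1 : R + ∑ i ∈ insert a s, outerC (g i)
          = (R + outerC (g a)) + ∑ i ∈ s, outerC (g i) := by
        rw [Finset.sum_insert ha]; abel
      rw [e1]
      exact le_trans (det_le_det_add_outer hR (g a))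
        (ih (hR.add_posSemidef (outerC_posSemidef (g a))))
  exact fun {R} hR => main Finset.univ hR

theorem cancel_helper {A B C D X Y : ℂ} (h1 : A + X ≤ C + Y) (h2 : Y + B ≤ X + D) :
    A + B ≤ C + D := by
  have comb := add_le_add h1 h2
  have h3 : A + B + (X + Y) ≤ C + D + (X + Y) := by
    calc A + B + (X + Y) = A + X + (Y + B) := by ring
      _ ≤ C + Y + (X + D) := comb
      _ = C + D + (X + Y) := by ring
  exact le_of_add_le_add_right h3

theorem cancel_helper' {A B C D X Y : ℂ} (h1 : A + Y ≤ X + D) (h2 : X + B ≤ C + Y) :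
    A + B ≤ C + D := by
  have comb := add_le_add h1 h2
  have h3 : A + B + (X + Y) ≤ C + D + (X + Y) := by
    calc A + B + (X + Y) = A + Y + (X + B) := by ring
      _ ≤ X + D + (C + Y) := comb
      _ = C + D + (X + Y) := by ring
  exact le_of_add_le_add_right h3

theorem det_supermod_outer {P : Matrix m m ℂ} (hP : P.PosSemidef) :
    ∀ {R : Matrix m m ℂ}, R.PosDef → ∀ (v : m → ℂ),
      (R + P).det + (R + outerC v).det ≤ (R + P + outerC v).det + R.det := by
  obtain ⟨g, rfl⟩ := psd_decomp hP
  have main : ∀ (s : Finset m) {R : Matrix m m ℂ}, R.PosDef → ∀ (v : m → ℂ),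
      (R + ∑ i ∈ s, outerC (g i)).det + (R + outerC v).det
        ≤ (R + ∑ i ∈ s, outerC (g i) + outerC v).det + R.det := by
    intro s
    induction s using Finset.induction_on with
    | empty => intro R hR v; simpa using le_of_eq (add_comm _ _)
    | @insert a s ha ih =>
      intro R hR v
      have hS : (∑ i ∈ s, outerC (g i)).PosSemidef := sum_outer_posSemidef g s
      have hRS : (R + ∑ i ∈ s, outerC (g i)).PosDef := hR.add_posSemidef hS
      have base := det_supermod_base hRS (g a) v
      have ih' := ih hR v
      have e1 : R + (outerC (g a) + ∑ i ∈ s, outerC (g i))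
          = R + ∑ i ∈ s, outerC (g i) + outerC (g a) := by abel
      rw [Finset.sum_insert ha, e1]
      exact cancel_helper base ih'
  exact fun {R} hR v => main Finset.univ hR v

theorem det_supermod {P Q : Matrix m m ℂ} (hP : P.PosSemidef) (hQ : Q.PosSemidef)
    {R : Matrix m m ℂ} (hR : R.PosDef) :
    (R + P).det + (R + Q).det ≤ (R + P + Q).det + R.det := by
  obtain ⟨g, rfl⟩ := psd_decomp hQ
  have main : ∀ (s : Finset m) {R : Matrix m m ℂ}, R.PosDef →
      (R + P).det + (R + ∑ i ∈ s, outerC (g i)).det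
        ≤ (R + P + ∑ i ∈ s, outerC (g i)).det + R.det := by
    intro s
    induction s using Finset.induction_on with
    | empty => intro R hR; simp
    | @insert a s ha ih =>
      intro R hR
      have hS : (∑ i ∈ s, outerC (g i)).PosSemidef := sum_outer_posSemidef g s
      have hRS : (R + ∑ i ∈ s, outerC (g i)).PosDef := hR.add_posSemidef hS
      have base := det_supermod_outer hP hRS (g a)
      have ih' := ih hR
      have e1 : R + (outerC (g a) + ∑ i ∈ s, outerC (g i))
          = R + ∑ i ∈ s, outerC (g i) + outerC (g a) := by abel
      have e2 : R + P + (outerC (g a) + ∑ i ∈ s, outerC (g i))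
          = R + P + ∑ i ∈ s, outerC (g i) + outerC (g a) := by abel
      have e3 : R + ∑ i ∈ s, outerC (g i) + P = R + P + ∑ i ∈ s, outerC (g i) := by abel
      rw [e3] at base
      rw [Finset.sum_insert ha, e1, e2]
      exact cancel_helper' ih' base
  exact main Finset.univ hR

theorem my_posDef_submatrix {M : Matrix l l ℂ} (hM : M.PosDef) (e : m → l)
    (he : Function.Injective e) : (M.submatrix e e).PosDef := by
  set B : Matrix l m ℂ := Matrix.of fun p i => if p = e i then 1 else 0 with hB
  have hrw : M.submatrix e e = Bᴴ * M * B := by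
    ext i j
    simp only [Matrix.submatrix_apply, Matrix.mul_apply, Matrix.conjTranspose_apply, hB,
      Matrix.of_apply]
    simp only [apply_ite (star : ℂ → ℂ), star_one, star_zero, ite_mul, one_mul, zero_mul,
      mul_ite, mul_one, mul_zero, Finset.sum_ite_eq', Finset.mem_univ, if_true]
  have hBx : ∀ x : m → ℂ, ∀ i₀, (B *ᵥ x) (e i₀) = x i₀ := by
    intro x i₀
    have hiff : ∀ i : m, (e i₀ = e i) = (i₀ = i) :=
      fun i => propext ⟨fun h => he h, fun h => by rw [h]⟩
    simp only [mulVec, dotProduct, hB, Matrix.of_apply, ite_mul, one_mul, zero_mul]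
    simp_rw [hiff]
    simp
  have hq : ∀ x : m → ℂ, star x ⬝ᵥ (Bᴴ * M * B) *ᵥ x = star (B *ᵥ x) ⬝ᵥ M *ᵥ (B *ᵥ x) := by
    intro x
    rw [Matrix.star_mulVec, Matrix.mul_assoc, ← Matrix.mulVec_mulVec,
      Matrix.dotProduct_mulVec (star x), Matrix.mulVec_mulVec]
  refine .of_dotProduct_mulVec_pos ?_ ?_
  · ext i j
    simp only [Matrix.conjTranspose_apply, Matrix.submatrix_apply]
    exact hM.1.apply _ _
  · intro x hx
    rw [hrw, hq]
    refine hM.dotProduct_mulVec_pos (x := B *ᵥ x) fun h0 => hx ?_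
    funext i
    have := congrFun h0 (e i)
    rwa [hBx x i] at this

section Blocks

variable {A₁ B₁ : Matrix m m ℂ} {A₁₂ B₁₂ : Matrix m l ℂ} {DA DB : Matrix l l ℂ}

theorem corner₁₁_posDef (hA : (fromBlocks A₁ A₁₂ A₁₂ᴴ DA).PosDef) : A₁.PosDef := by
  have h := my_posDef_submatrix hA Sum.inl Sum.inl_injective
  have : (fromBlocks A₁ A₁₂ A₁₂ᴴ DA).submatrix Sum.inl Sum.inl = A₁ := by
    ext i j; simp [Matrix.submatrix_apply]
  rwa [this] at h

theorem main_block
    (hA : (fromBlocks A₁ A₁₂ A₁₂ᴴ DA).PosDef)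
    (hB : (fromBlocks B₁ B₁₂ B₁₂ᴴ DB).PosDef) :
    (Matrix.hadamard DA (DB - B₁₂ᴴ * B₁⁻¹ * B₁₂)).det
      + (Matrix.hadamard DB (DA - A₁₂ᴴ * A₁⁻¹ * A₁₂)).det
    ≤ (Matrix.hadamard DA DB
          - (Matrix.hadamard A₁₂ B₁₂)ᴴ * (Matrix.hadamard A₁ B₁)⁻¹
            * (Matrix.hadamard A₁₂ B₁₂)).det
      + (Matrix.hadamard (DA - A₁₂ᴴ * A₁⁻¹ * A₁₂) (DB - B₁₂ᴴ * B₁⁻¹ * B₁₂)).det := by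
  have hA₁ : A₁.PosDef := corner₁₁_posDef hA
  have hB₁ : B₁.PosDef := corner₁₁_posDef hB
  haveI : Invertible A₁ := hA₁.isUnit.invertible
  haveI : Invertible B₁ := hB₁.isUnit.invertible
  set EA := A₁₂ᴴ * A₁⁻¹ * A₁₂ with hEAdef
  set EB := B₁₂ᴴ * B₁⁻¹ * B₁₂ with hEBdef
  set SA := DA - EA with hSAdef
  set SB := DB - EB with hSBdef
  have hEA : EA.PosSemidef := (hA₁.inv.posSemidef).conjTranspose_mul_mul_same A₁₂
  have hEB : EB.PosSemidef := (hB₁.inv.posSemidef).conjTranspose_mul_mul_same B₁₂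
  have hSA : SA.PosSemidef := (Matrix.PosDef.fromBlocks₁₁ A₁₂ DA hA₁).mp hA.posSemidef
  have hSB : SB.PosSemidef := (Matrix.PosDef.fromBlocks₁₁ B₁₂ DB hB₁).mp hB.posSemidef
  have hSApd : SA.PosDef := by
    refine my_posDef_of_det hSA (isUnit_iff_ne_zero.mpr fun h0 => ?_)
    have hdet := Matrix.det_fromBlocks₁₁ A₁ A₁₂ A₁₂ᴴ DA
    rw [Matrix.invOf_eq_nonsing_inv] at hdet
    have := hA.det_pos.ne'
    rw [hdet, ← hEAdef, ← hSAdef, h0, mul_zero] at this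
    exact this rfl
  have hSBpd : SB.PosDef := by
    refine my_posDef_of_det hSB (isUnit_iff_ne_zero.mpr fun h0 => ?_)
    have hdet := Matrix.det_fromBlocks₁₁ B₁ B₁₂ B₁₂ᴴ DB
    rw [Matrix.invOf_eq_nonsing_inv] at hdet
    have := hB.det_pos.ne'
    rw [hdet, ← hEBdef, ← hSBdef, h0, mul_zero] at this
    exact this rfl
  -- the three pieces
  set R := Matrix.hadamard SA SB with hRdef
  set P := Matrix.hadamard EA SB with hPdef
  set Q := Matrix.hadamard SA EB with hQdef
  have hRpd : R.PosDef := my_hadamard_posDef hSApd hSBpd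
  have hP : P.PosSemidef := my_hadamard_posSemidef hEA hSB
  have hQ : Q.PosSemidef := my_hadamard_posSemidef hSA hEB
  have eq1 : Matrix.hadamard DA SB = R + P := by
    ext i j
    simp only [Matrix.hadamard_apply, Matrix.add_apply, hRdef, hPdef, hSAdef, Matrix.sub_apply]
    ring
  have eq2 : Matrix.hadamard DB SA = R + Q := by
    ext i j
    simp only [Matrix.hadamard_apply, Matrix.add_apply, hRdef, hQdef, hSBdef, Matrix.sub_apply]
    ring
  have hsupermod := det_supermod hP hQ hRpd
  -- key PSD fact
  have hA₁B₁ : (Matrix.hadamard A₁ B₁).PosDef := my_hadamard_posDef hA₁ hB₁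
  haveI : Invertible (Matrix.hadamard A₁ B₁) := hA₁B₁.isUnit.invertible
  have hNA : (fromBlocks A₁ A₁₂ A₁₂ᴴ EA).PosSemidef := by
    refine (Matrix.PosDef.fromBlocks₁₁ A₁₂ EA hA₁).mpr ?_
    rw [← hEAdef, sub_self]
    exact Matrix.PosSemidef.zero
  have hNB : (fromBlocks B₁ B₁₂ B₁₂ᴴ EB).PosSemidef := by
    refine (Matrix.PosDef.fromBlocks₁₁ B₁₂ EB hB₁).mpr ?_
    rw [← hEBdef, sub_self]
    exact Matrix.PosSemidef.zero
  have hNN := my_hadamard_posSemidef hNA hNB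
  have hBlocks : Matrix.hadamard (fromBlocks A₁ A₁₂ A₁₂ᴴ EA) (fromBlocks B₁ B₁₂ B₁₂ᴴ EB)
      = fromBlocks (Matrix.hadamard A₁ B₁) (Matrix.hadamard A₁₂ B₁₂)
          (Matrix.hadamard A₁₂ B₁₂)ᴴ (Matrix.hadamard DA DB - (R + P + Q)) := by
    ext i j
    rcases i with i | i <;> rcases j with j | j <;>
      simp only [Matrix.hadamard_apply, Matrix.fromBlocks_apply₁₁, Matrix.fromBlocks_apply₁₂,
        Matrix.fromBlocks_apply₂₁, Matrix.fromBlocks_apply₂₂, Matrix.conjTranspose_apply,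
        Matrix.sub_apply, Matrix.add_apply, hRdef, hPdef, hQdef, hSAdef, hSBdef, star_mul'] <;>
      ring
  rw [hBlocks] at hNN
  have hkey := (Matrix.PosDef.fromBlocks₁₁ _ _ hA₁B₁).mp hNN
  -- hkey : (hadamard DA DB - (R+P+Q) - (A₁₂∘B₁₂)ᴴ (A₁∘B₁)⁻¹ (A₁₂∘B₁₂)).PosSemidef
  have hRPQpd : (R + P + Q).PosDef := (hRpd.add_posSemidef hP).add_posSemidef hQ
  have hmono : (R + P + Q).det
      ≤ (Matrix.hadamard DA DB
          - (Matrix.hadamard A₁₂ B₁₂)ᴴ * (Matrix.hadamard A₁ B₁)⁻¹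
            * (Matrix.hadamard A₁₂ B₁₂)).det := by
    have e : Matrix.hadamard DA DB
          - (Matrix.hadamard A₁₂ B₁₂)ᴴ * (Matrix.hadamard A₁ B₁)⁻¹ * (Matrix.hadamard A₁₂ B₁₂)
        = (R + P + Q) + (Matrix.hadamard DA DB - (R + P + Q)
            - (Matrix.hadamard A₁₂ B₁₂)ᴴ * (Matrix.hadamard A₁ B₁)⁻¹
              * (Matrix.hadamard A₁₂ B₁₂)) := by abel
    rw [e]
    exact det_mono_adds hkey hRPQpd
  calc (Matrix.hadamard DA SB).det + (Matrix.hadamard DB SA).det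
      = (R + P).det + (R + Q).det := by rw [eq1, eq2]
    _ ≤ (R + P + Q).det + R.det := hsupermod
    _ ≤ (Matrix.hadamard DA DB
          - (Matrix.hadamard A₁₂ B₁₂)ᴴ * (Matrix.hadamard A₁ B₁)⁻¹
            * (Matrix.hadamard A₁₂ B₁₂)).det + R.det := by
        exact add_le_add_left hmono _
    _ = _ := by rw [hRdef]

end Blocks

end

-- Part III : transfer
def offDiagX {n k : ℕ} (A : Matrix (Fin n × Fin k) (Fin n × Fin k) ℂ)
    (μ : ℕ) (h : μ - 1 < n) : Matrix (Fin (μ - 1) × Fin k) (Fin k) ℂ :=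
  Matrix.of fun p b => A (Fin.castLE h.le p.1, p.2) (⟨μ - 1, h⟩, b)

def embMap {n k μ : ℕ} (h : μ - 1 < n) : (Fin (μ - 1) × Fin k) ⊕ Fin k → Fin n × Fin k :=
  Sum.elim (fun p => (Fin.castLE h.le p.1, p.2)) (fun a => (⟨μ - 1, h⟩, a))

theorem embMap_injective {n k μ : ℕ} (h : μ - 1 < n) :
    Function.Injective (embMap (k := k) h) := by
  rintro (⟨p1, p2⟩ | a) (⟨q1, q2⟩ | b) hxy <;>
    simp only [embMap, Sum.elim_inl, Sum.elim_inr, Prod.mk.injEq] at hxy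
  · obtain ⟨h1, h2⟩ := hxy
    have h3 : p1 = q1 := by
      have := congrArg Fin.val h1
      simpa [Fin.ext_iff] using this
    simp [h3, h2]
  · exfalso
    have := congrArg Fin.val hxy.1
    have hlt := p1.isLt
    simp [Fin.castLE] at this
    omega
  · exfalso
    have := congrArg Fin.val hxy.1
    have hlt := q1.isLt
    simp [Fin.castLE] at this
    omega
  · simp [hxy.2]

theorem submatrix_embMap {n k : ℕ} (A : Matrix (Fin n × Fin k) (Fin n × Fin k) ℂ)
    (hA : A.IsHermitian) (μ : ℕ) (h : μ - 1 < n) :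
    A.submatrix (embMap h) (embMap h)
      = fromBlocks (leadBlock A (μ - 1) h.le) (offDiagX A μ h)
          (offDiagX A μ h)ᴴ (diagBlock A μ h) := by
  ext i j
  rcases i with p | a <;> rcases j with q | b <;>
    simp only [Matrix.submatrix_apply, embMap, Sum.elim_inl, Sum.elim_inr,
      Matrix.fromBlocks_apply₁₁, Matrix.fromBlocks_apply₁₂, Matrix.fromBlocks_apply₂₁,
      Matrix.fromBlocks_apply₂₂, leadBlock, offDiagX, diagBlock, Matrix.of_apply,
      Matrix.conjTranspose_apply]
  exact (hA.apply _ _).symm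

theorem schurLead_eq {n k : ℕ} (A : Matrix (Fin n × Fin k) (Fin n × Fin k) ℂ)
    (hA : A.IsHermitian) (μ : ℕ) (h : μ - 1 < n) :
    schurLead A μ h = diagBlock A μ h
      - (offDiagX A μ h)ᴴ * (leadBlock A (μ - 1) h.le)⁻¹ * (offDiagX A μ h) := by
  have e : (Matrix.of fun a (p : Fin (μ - 1) × Fin k) =>
      A (⟨μ - 1, h⟩, a) (Fin.castLE h.le p.1, p.2)) = (offDiagX A μ h)ᴴ := by
    ext a p
    simp only [Matrix.of_apply, Matrix.conjTranspose_apply, offDiagX]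
    exact (hA.apply _ _).symm
  unfold schurLead
  rw [e]
  rfl

theorem diagBlock_hadamard {n k : ℕ} (A B : Matrix (Fin n × Fin k) (Fin n × Fin k) ℂ)
    (μ : ℕ) (h : μ - 1 < n) :
    diagBlock (Matrix.hadamard A B) μ h
      = Matrix.hadamard (diagBlock A μ h) (diagBlock B μ h) := rfl

theorem leadBlock_hadamard {n k : ℕ} (A B : Matrix (Fin n × Fin k) (Fin n × Fin k) ℂ)
    (μ : ℕ) (h : μ ≤ n) :
    leadBlock (Matrix.hadamard A B) μ h
      = Matrix.hadamard (leadBlock A μ h) (leadBlock B μ h) := rfl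

theorem offDiagX_hadamard {n k : ℕ} (A B : Matrix (Fin n × Fin k) (Fin n × Fin k) ℂ)
    (μ : ℕ) (h : μ - 1 < n) :
    offDiagX (Matrix.hadamard A B) μ h
      = Matrix.hadamard (offDiagX A μ h) (offDiagX B μ h) := rfl

/-- **Proposition 2.4.** For positive definite block matrices `A, B ∈ M_n(M_k)` and
`2 ≤ μ ≤ n`,
`det((A_μ∘B_μ)/(A_{μ-1}∘B_{μ-1})) + det((A_μ/A_{μ-1})∘(B_μ/B_{μ-1})) ≥
 det(A_{μμ}∘(B_μ/B_{μ-1})) + det(B_{μμ}∘(A_μ/A_{μ-1}))`. -/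
theorem prop24_schur_det {n k : ℕ}
    (A B : Matrix (Fin n × Fin k) (Fin n × Fin k) ℂ)
    (hA : A.PosDef) (hB : B.PosDef)
    (μ : ℕ) (hμ2 : 2 ≤ μ) (hμn : μ ≤ n) :
    (schurLead (Matrix.hadamard A B) μ (by omega)).det.re +
      (Matrix.hadamard (schurLead A μ (by omega)) (schurLead B μ (by omega))).det.re ≥
    (Matrix.hadamard (diagBlock A μ (by omega)) (schurLead B μ (by omega))).det.re +
      (Matrix.hadamard (diagBlock B μ (by omega)) (schurLead A μ (by omega))).det.re := by
  have h : μ - 1 < n := by omega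
  have hA' : (fromBlocks (leadBlock A (μ - 1) h.le) (offDiagX A μ h)
      (offDiagX A μ h)ᴴ (diagBlock A μ h)).PosDef := by
    rw [← submatrix_embMap A hA.1 μ h]
    exact my_posDef_submatrix hA (embMap h) (embMap_injective h)
  have hB' : (fromBlocks (leadBlock B (μ - 1) h.le) (offDiagX B μ h)
      (offDiagX B μ h)ᴴ (diagBlock B μ h)).PosDef := by
    rw [← submatrix_embMap B hB.1 μ h]
    exact my_posDef_submatrix hB (embMap h) (embMap_injective h)
  have hmain := main_block hA' hB'
  rw [← schurLead_eq A hA.1 μ h, ← schurLead_eq B hB.1 μ h] at hmain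
  have hhad : schurLead (Matrix.hadamard A B) μ h
      = Matrix.hadamard (diagBlock A μ h) (diagBlock B μ h)
        - (Matrix.hadamard (offDiagX A μ h) (offDiagX B μ h))ᴴ
          * (Matrix.hadamard (leadBlock A (μ - 1) h.le) (leadBlock B (μ - 1) h.le))⁻¹
          * (Matrix.hadamard (offDiagX A μ h) (offDiagX B μ h)) := by
    rw [schurLead_eq (Matrix.hadamard A B) (my_had_herm hA.1 hB.1) μ h,
      diagBlock_hadamard, leadBlock_hadamard, offDiagX_hadamard]
  rw [← hhad] at hmain
  have hre := (Complex.le_def.mp hmain).1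
  simp only [Complex.add_re] at hre
  exact hre
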